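/- arXiv:2411.19380 — 2 statements merged into one kernel-verified Lean document; each statement's English description precedes it below -/
import Mathlib

section
/- Let k be an algebraically closed field of characteristic ≠ 2 and let q be the quadratic form (x,y,z) ↦ x² + y² on k³. Then the even Clifford algebra Cl₀(q) is isomorphic, as a k-algebra, to the k-subalgebra of the 2×2 matrix algebra M₂(k[ε]) consisting of all matrices [[a, bε], [cε, d]] with a, b, c, d ∈ k (i.e. matrices whose diagonal entries lie in k·1 and whose off-diagonal entries lie in k·ε). -/
open CliffordAlgebra

namespace Stmt5Aux

variable {k : Type} [Field k]

noncomputable abbrev Mx (k : Type) [Field k] := Matrix (Fin 2) (Fin 2) (DualNumber k)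

noncomputable def E1 (k : Type) [Field k] : Mx k := !![0, 1; 1, 0]
noncomputable def E2 (i : k) : Mx k :=
  !![0, algebraMap k (DualNumber k) i; -(algebraMap k (DualNumber k) i), 0]
noncomputable def E3 (k : Type) [Field k] : Mx k := !![DualNumber.eps, 0; 0, -DualNumber.eps]

noncomputable def fmap (i : k) : ((k × k) × k) →ₗ[k] Mx k where
  toFun v := v.1.1 • E1 k + v.1.2 • E2 i + v.2 • E3 k
  map_add' v w := by
    simp only [Prod.fst_add, Prod.snd_add, add_smul]
    abel
  map_smul' c v := by
    simp only [Prod.smul_fst, Prod.smul_snd, smul_eq_mul, mul_smul, RingHom.id_apply, smul_add]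

abbrev Qf (k : Type) [Field k] : QuadraticForm k ((k × k) × k) :=
  (QuadraticMap.prod (QuadraticMap.prod (QuadraticMap.sq : QuadraticForm k k)
    (QuadraticMap.sq : QuadraticForm k k)) (0 : QuadraticForm k k))

theorem fmap_sq (i : k) (hi : i * i = -1) (v : (k × k) × k) :
    fmap i v * fmap i v = algebraMap k (Mx k) (Qf k v) := by
  obtain ⟨⟨x, y⟩, z⟩ := v
  ext r c <;> fin_cases r <;> fin_cases c <;>
    simp [fmap, E1, E2, E3, Matrix.mul_apply, Fin.sum_univ_two, Matrix.algebraMap_matrix_apply,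
      QuadraticMap.prod_apply, QuadraticMap.sq_apply,
      TrivSqZeroExt.fst_mul, TrivSqZeroExt.snd_mul, TrivSqZeroExt.fst_smul,
      TrivSqZeroExt.snd_smul, DualNumber.fst_eps, DualNumber.snd_eps, smul_eq_mul,
      TrivSqZeroExt.algebraMap_eq_inl, TrivSqZeroExt.algebraMap_eq_inl',
      TrivSqZeroExt.fst_inl, TrivSqZeroExt.snd_inl] <;>
    first
      | ring1
      | linear_combination (-(y * y)) * hi

noncomputable def Phi (i : k) (hi : i * i = -1) : CliffordAlgebra (Qf k) →ₐ[k] Mx k :=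
  CliffordAlgebra.lift (Qf k) ⟨fmap i, fmap_sq i hi⟩

def e1 (k : Type) [Field k] : (k × k) × k := ((1, 0), 0)
def e2 (k : Type) [Field k] : (k × k) × k := ((0, 1), 0)
def e3 (k : Type) [Field k] : (k × k) × k := ((0, 0), 1)

section relations

-- squares
theorem sq1 : ι (Qf k) (e1 k) * ι (Qf k) (e1 k) = 1 := by
  rw [ι_sq_scalar]; simp [e1, QuadraticMap.prod_apply, QuadraticMap.sq_apply]

theorem sq2 : ι (Qf k) (e2 k) * ι (Qf k) (e2 k) = 1 := by
  rw [ι_sq_scalar]; simp [e2, QuadraticMap.prod_apply, QuadraticMap.sq_apply]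

theorem sq3 : ι (Qf k) (e3 k) * ι (Qf k) (e3 k) = 0 := by
  rw [ι_sq_scalar]; simp [e3, QuadraticMap.prod_apply, QuadraticMap.sq_apply]

theorem sq1' (x : CliffordAlgebra (Qf k)) : ι (Qf k) (e1 k) * (ι (Qf k) (e1 k) * x) = x := by
  rw [← mul_assoc, sq1, one_mul]

theorem sq2' (x : CliffordAlgebra (Qf k)) : ι (Qf k) (e2 k) * (ι (Qf k) (e2 k) * x) = x := by
  rw [← mul_assoc, sq2, one_mul]

theorem sq3' (x : CliffordAlgebra (Qf k)) : ι (Qf k) (e3 k) * (ι (Qf k) (e3 k) * x) = 0 := by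
  rw [← mul_assoc, sq3, zero_mul]

theorem polar_zero12 : QuadraticMap.polar (⇑(Qf k)) (e1 k) (e2 k) = 0 := by
  simp [QuadraticMap.polar, e1, e2, QuadraticMap.prod_apply, QuadraticMap.sq_apply]

theorem polar_zero13 : QuadraticMap.polar (⇑(Qf k)) (e1 k) (e3 k) = 0 := by
  simp [QuadraticMap.polar, e1, e3, QuadraticMap.prod_apply, QuadraticMap.sq_apply]

theorem polar_zero23 : QuadraticMap.polar (⇑(Qf k)) (e2 k) (e3 k) = 0 := by
  simp [QuadraticMap.polar, e2, e3, QuadraticMap.prod_apply, QuadraticMap.sq_apply]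

theorem sw21 : ι (Qf k) (e2 k) * ι (Qf k) (e1 k) = -(ι (Qf k) (e1 k) * ι (Qf k) (e2 k)) := by
  have h := ι_mul_ι_add_swap (Q := Qf k) (e1 k) (e2 k)
  rw [polar_zero12, map_zero] at h
  rw [eq_neg_iff_add_eq_zero, add_comm]; exact h

theorem sw31 : ι (Qf k) (e3 k) * ι (Qf k) (e1 k) = -(ι (Qf k) (e1 k) * ι (Qf k) (e3 k)) := by
  have h := ι_mul_ι_add_swap (Q := Qf k) (e1 k) (e3 k)
  rw [polar_zero13, map_zero] at h
  rw [eq_neg_iff_add_eq_zero, add_comm]; exact h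

theorem sw32 : ι (Qf k) (e3 k) * ι (Qf k) (e2 k) = -(ι (Qf k) (e2 k) * ι (Qf k) (e3 k)) := by
  have h := ι_mul_ι_add_swap (Q := Qf k) (e2 k) (e3 k)
  rw [polar_zero23, map_zero] at h
  rw [eq_neg_iff_add_eq_zero, add_comm]; exact h

theorem sw21' (x : CliffordAlgebra (Qf k)) :
    ι (Qf k) (e2 k) * (ι (Qf k) (e1 k) * x) = -(ι (Qf k) (e1 k) * (ι (Qf k) (e2 k) * x)) := by
  rw [← mul_assoc, sw21, neg_mul, mul_assoc]

theorem sw31' (x : CliffordAlgebra (Qf k)) :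
    ι (Qf k) (e3 k) * (ι (Qf k) (e1 k) * x) = -(ι (Qf k) (e1 k) * (ι (Qf k) (e3 k) * x)) := by
  rw [← mul_assoc, sw31, neg_mul, mul_assoc]

theorem sw32' (x : CliffordAlgebra (Qf k)) :
    ι (Qf k) (e3 k) * (ι (Qf k) (e2 k) * x) = -(ι (Qf k) (e2 k) * (ι (Qf k) (e3 k) * x)) := by
  rw [← mul_assoc, sw32, neg_mul, mul_assoc]

end relations

noncomputable def gen (k : Type) [Field k] : Fin 4 → CliffordAlgebra (Qf k) :=
  ![1, ι (Qf k) (e1 k) * ι (Qf k) (e2 k), ι (Qf k) (e1 k) * ι (Qf k) (e3 k),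
    ι (Qf k) (e2 k) * ι (Qf k) (e3 k)]

noncomputable def S (k : Type) [Field k] : Submodule k (CliffordAlgebra (Qf k)) :=
  Submodule.span k (Set.range (gen k))

theorem gen_mem (t : Fin 4) : gen k t ∈ S k := Submodule.subset_span ⟨t, rfl⟩

noncomputable def iv (k : Type) [Field k] : Fin 3 → CliffordAlgebra (Qf k) :=
  ![ι (Qf k) (e1 k), ι (Qf k) (e2 k), ι (Qf k) (e3 k)]

theorem pair_mul_mem (p q : Fin 3) {x : CliffordAlgebra (Qf k)} (hx : x ∈ S k) :
    iv k p * (iv k q * x) ∈ S k := by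
  refine Submodule.span_induction ?_ ?_ ?_ ?_ hx
  · rintro _ ⟨t, rfl⟩
    fin_cases p <;> fin_cases q <;> fin_cases t <;>
      simp only [iv, gen, Fin.isValue, Fin.zero_eta, Fin.mk_one, Fin.reduceFinMk,
        Matrix.cons_val_zero, Matrix.cons_val_one,
        Matrix.head_cons, Matrix.cons_val_two, Matrix.tail_cons, Matrix.cons_val_three,
        mul_assoc, sq1, sq2, sq3, sq1', sq2', sq3', sw21, sw31, sw32, sw21', sw31', sw32',
        mul_one, one_mul, mul_zero, zero_mul, mul_neg, neg_neg, neg_zero] <;>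
      first
        | exact gen_mem 0
        | exact gen_mem 1
        | exact gen_mem 2
        | exact gen_mem 3
        | exact neg_mem (gen_mem 0)
        | exact neg_mem (gen_mem 1)
        | exact neg_mem (gen_mem 2)
        | exact neg_mem (gen_mem 3)
        | exact zero_mem _
  · simp only [mul_zero]; exact zero_mem _
  · intro y z _ _ hy hz
    rw [mul_add, mul_add]
    exact add_mem hy hz
  · intro c y _ hy
    rw [mul_smul_comm, mul_smul_comm]
    exact Submodule.smul_mem _ _ hy


theorem ι_expand (m : (k × k) × k) :
    ι (Qf k) m = m.1.1 • iv k 0 + m.1.2 • iv k 1 + m.2 • iv k 2 := by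
  have hm : m = m.1.1 • e1 k + m.1.2 • e2 k + m.2 • e3 k := by
    simp [e1, e2, e3, Prod.ext_iff]
  conv_lhs => rw [hm]
  simp only [map_add, map_smul, iv, Matrix.cons_val_zero, Matrix.cons_val_one,
    Matrix.head_cons, Matrix.cons_val_two, Matrix.tail_cons]

theorem even_le_span {x : CliffordAlgebra (Qf k)} (hx : x ∈ even (Qf k)) : x ∈ S k := by
  refine even_induction (Q := Qf k) (motive := fun y _ => y ∈ S k) ?_ ?_ ?_ x hx
  · intro r
    rw [Algebra.algebraMap_eq_smul_one]
    exact Submodule.smul_mem _ _ (gen_mem 0)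
  · intro y z _ _ hy hz
    exact add_mem hy hz
  · intro m₁ m₂ y _ hy
    rw [ι_expand m₁, ι_expand m₂]
    simp only [add_mul, smul_mul_assoc, mul_add, mul_smul_comm, smul_smul, mul_assoc]
    repeat
      first
        | apply add_mem
        | apply Submodule.smul_mem
        | exact pair_mul_mem _ _ hy


theorem Phi_ι (i : k) (hi : i * i = -1) (m : (k × k) × k) :
    Phi i hi (ι (Qf k) m) = fmap i m :=
  CliffordAlgebra.lift_ι_apply _ _ _

set_option maxHeartbeats 2000000 in
theorem Phi_comb (i : k) (hi : i * i = -1) (c : Fin 4 → k) :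
    Phi i hi (∑ t, c t • gen k t) =
      !![algebraMap k (DualNumber k) (c 0 - c 1 * i), (-(c 2) - c 3 * i) • DualNumber.eps;
         (c 2 - c 3 * i) • DualNumber.eps, algebraMap k (DualNumber k) (c 0 + c 1 * i)] := by
  rw [Fin.sum_univ_four]
  simp only [gen, Matrix.cons_val_zero, Matrix.cons_val_one, Matrix.head_cons,
    Matrix.cons_val_two, Matrix.tail_cons, Matrix.cons_val_three, map_add, map_smul, map_mul,
    map_one, Phi_ι]
  ext r c' <;> fin_cases r <;> fin_cases c' <;>
    simp [fmap, E1, E2, E3, e1, e2, e3, Matrix.mul_apply, Fin.sum_univ_two, Matrix.one_apply,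
      TrivSqZeroExt.fst_mul, TrivSqZeroExt.snd_mul, TrivSqZeroExt.fst_smul,
      TrivSqZeroExt.snd_smul, DualNumber.fst_eps, DualNumber.snd_eps, smul_eq_mul,
      TrivSqZeroExt.algebraMap_eq_inl, TrivSqZeroExt.fst_inl, TrivSqZeroExt.snd_inl] <;>
    ring


theorem gen_mem_even (t : Fin 4) : gen k t ∈ even (Qf k) := by
  fin_cases t
  · exact one_mem _
  · exact ι_mul_ι_mem_evenOdd_zero _ _ _
  · exact ι_mul_ι_mem_evenOdd_zero _ _ _
  · exact ι_mul_ι_mem_evenOdd_zero _ _ _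

noncomputable def Asub (k : Type) [Field k] : Subalgebra k (Mx k) where
  carrier := {N | (N 0 0).snd = 0 ∧ (N 0 1).fst = 0 ∧ (N 1 0).fst = 0 ∧ (N 1 1).snd = 0}
  mul_mem' := by
    rintro a b ⟨ha00, ha01, ha10, ha11⟩ ⟨hb00, hb01, hb10, hb11⟩
    simp only [Set.mem_setOf_eq, Matrix.mul_apply, Fin.sum_univ_two,
      TrivSqZeroExt.fst_add, TrivSqZeroExt.snd_add, TrivSqZeroExt.fst_mul,
      TrivSqZeroExt.snd_mul, smul_eq_mul, ha00, ha01, ha10, ha11,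
      hb00, hb01, hb10, hb11, MulOpposite.op_smul, MulOpposite.smul_eq_mul_unop,
      MulOpposite.unop_op]
    refine ⟨by ring, by ring, by ring, by ring⟩
  one_mem' := by
    simp [Matrix.one_apply]
  add_mem' := by
    rintro a b ⟨ha00, ha01, ha10, ha11⟩ ⟨hb00, hb01, hb10, hb11⟩
    simp_all [Matrix.add_apply]
  algebraMap_mem' := by
    intro r
    simp [Matrix.algebraMap_matrix_apply, TrivSqZeroExt.algebraMap_eq_inl]

theorem mem_Asub_iff {N : Mx k} :
    N ∈ Asub k ↔ (N 0 0).snd = 0 ∧ (N 0 1).fst = 0 ∧ (N 1 0).fst = 0 ∧ (N 1 1).snd = 0 :=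
  Iff.rfl

theorem fpair_mem (i : k) (m m' : (k × k) × k) : fmap i m * fmap i m' ∈ Asub k := by
  rw [mem_Asub_iff]
  obtain ⟨⟨x, y⟩, z⟩ := m
  obtain ⟨⟨x', y'⟩, z'⟩ := m'
  simp [fmap, E1, E2, E3, Matrix.mul_apply, Fin.sum_univ_two,
    TrivSqZeroExt.fst_mul, TrivSqZeroExt.snd_mul, TrivSqZeroExt.fst_smul,
    TrivSqZeroExt.snd_smul, DualNumber.fst_eps, DualNumber.snd_eps, smul_eq_mul,
    TrivSqZeroExt.algebraMap_eq_inl, TrivSqZeroExt.fst_inl, TrivSqZeroExt.snd_inl]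

theorem Phi_even_mem (i : k) (hi : i * i = -1) {x : CliffordAlgebra (Qf k)}
    (hx : x ∈ even (Qf k)) : Phi i hi x ∈ Asub k := by
  refine even_induction (Q := Qf k) (motive := fun y _ => Phi i hi y ∈ Asub k) ?_ ?_ ?_ x hx
  · intro r
    rw [AlgHom.commutes]
    exact Subalgebra.algebraMap_mem _ _
  · intro y z _ _ hy hz
    rw [map_add]
    exact add_mem hy hz
  · intro m₁ m₂ y _ hy
    rw [map_mul, map_mul, Phi_ι, Phi_ι]
    exact mul_mem (fpair_mem i m₁ m₂) hy


theorem Phi_inj_on_even (i : k) (hi : i * i = -1) (h2 : (2 : k) ≠ 0) (hi0 : i ≠ 0)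
    {x : CliffordAlgebra (Qf k)} (hx : x ∈ even (Qf k)) (hx0 : Phi i hi x = 0) : x = 0 := by
  have hs := even_le_span hx
  rw [S, Submodule.mem_span_range_iff_exists_fun] at hs
  obtain ⟨c, rfl⟩ := hs
  rw [Phi_comb] at hx0
  have h00 := congrArg TrivSqZeroExt.fst (congrFun (congrFun hx0 0) 0)
  have h01 := congrArg TrivSqZeroExt.snd (congrFun (congrFun hx0 0) 1)
  have h10 := congrArg TrivSqZeroExt.snd (congrFun (congrFun hx0 1) 0)
  have h11 := congrArg TrivSqZeroExt.fst (congrFun (congrFun hx0 1) 1)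
  simp [TrivSqZeroExt.algebraMap_eq_inl, TrivSqZeroExt.fst_inl, TrivSqZeroExt.snd_inl,
    TrivSqZeroExt.fst_smul, TrivSqZeroExt.snd_smul, DualNumber.fst_eps, DualNumber.snd_eps,
    smul_eq_mul] at h00 h01 h10 h11
  have hc0 : c 0 = 0 := by
    have h : c 0 * 2 = 0 := by linear_combination h00 + h11
    exact (mul_eq_zero.mp h).resolve_right h2
  have hc1 : c 1 = 0 := by
    have : c 1 * (2 * i) = 0 := by linear_combination h11 - h00
    rcases mul_eq_zero.mp this with h | h
    · exact h
    · exact absurd h (by exact mul_ne_zero h2 hi0)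
  have hc2 : c 2 = 0 := by
    have h : c 2 * 2 = 0 := by linear_combination h10 - h01
    exact (mul_eq_zero.mp h).resolve_right h2
  have hc3 : c 3 = 0 := by
    have : c 3 * (2 * i) = 0 := by linear_combination -h01 - h10
    rcases mul_eq_zero.mp this with h | h
    · exact h
    · exact absurd h (by exact mul_ne_zero h2 hi0)
  have : c = fun _ => 0 := by
    funext t; fin_cases t <;> assumption
  rw [this]
  simp


theorem Phi_surj (i : k) (hi : i * i = -1) (h2 : (2 : k) ≠ 0) {N : Mx k} (hN : N ∈ Asub k) :
    ∃ x ∈ even (Qf k), Phi i hi x = N := by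
  obtain ⟨h00, h01, h10, h11⟩ := mem_Asub_iff.mp hN
  set a := (N 0 0).fst with ha
  set b := (N 0 1).snd with hb
  set c' := (N 1 0).snd with hc'
  set d := (N 1 1).fst with hd
  set u : k := (2 : k)⁻¹ with hu'
  have hu : u * 2 = 1 := inv_mul_cancel₀ h2
  refine ⟨∑ t, (![(a + d) * u, (a - d) * i * u, (c' - b) * u, (b + c') * i * u] : Fin 4 → k) t
      • gen k t, ?_, ?_⟩
  · exact sum_mem fun t _ => Subalgebra.smul_mem _ (gen_mem_even t) _
  · rw [Phi_comb]
    ext r c'' <;> fin_cases r <;> fin_cases c'' <;>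
      simp [TrivSqZeroExt.algebraMap_eq_inl, TrivSqZeroExt.fst_inl, TrivSqZeroExt.snd_inl,
        TrivSqZeroExt.fst_smul, TrivSqZeroExt.snd_smul, DualNumber.fst_eps, DualNumber.snd_eps,
        smul_eq_mul, h00, h01, h10, h11, ← ha, ← hb, ← hc', ← hd] <;>
      first
        | linear_combination (-(a - d) * u) * hi + a * hu
        | linear_combination ((a - d) * u) * hi + d * hu
        | linear_combination (-(b + c') * u) * hi + b * hu
        | linear_combination (-(b + c') * u) * hi + c' * hu

end Stmt5Aux

open Stmt5Aux

/-- Let `k` be an algebraically closed field of characteristic `≠ 2` and let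
`q` be the quadratic form `(x, y, z) ↦ x² + y²` on `k³` (modelled on `(k × k) × k`).  Then the
even Clifford algebra `Cl₀(q)` is isomorphic, as a `k`-algebra, to the `k`-subalgebra of
`M₂(k[ε])` consisting of the matrices `[[a, bε], [cε, d]]` with `a, b, c, d ∈ k`. -/
theorem stmt5 (k : Type) [Field k] [IsAlgClosed k] (hchar : ringChar k ≠ 2) :
    ∃ A : Subalgebra k (Matrix (Fin 2) (Fin 2) (DualNumber k)),
      (A : Set (Matrix (Fin 2) (Fin 2) (DualNumber k))) =
        {M | ∃ a b c d : k,
          M 0 0 = algebraMap k (DualNumber k) a ∧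
          M 0 1 = b • DualNumber.eps ∧
          M 1 0 = c • DualNumber.eps ∧
          M 1 1 = algebraMap k (DualNumber k) d} ∧
      Nonempty (↥(CliffordAlgebra.even
          (QuadraticMap.prod
            (QuadraticMap.prod (QuadraticMap.sq : QuadraticForm k k)
              (QuadraticMap.sq : QuadraticForm k k))
            (0 : QuadraticForm k k))) ≃ₐ[k] ↥A) := by
  obtain ⟨i, hi2⟩ := IsAlgClosed.exists_pow_nat_eq (-1 : k) zero_lt_two
  rw [pow_two] at hi2
  have hi : i * i = -1 := hi2
  have h2 : (2 : k) ≠ 0 := Ring.two_ne_zero hchar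
  have hi0 : i ≠ 0 := by
    intro h
    rw [h, mul_zero] at hi
    exact absurd hi (by norm_num)
  refine ⟨Asub k, ?_, ?_⟩
  · ext N
    simp only [SetLike.mem_coe, Set.mem_setOf_eq]
    constructor
    · intro hN
      obtain ⟨h00, h01, h10, h11⟩ := mem_Asub_iff.mp hN
      refine ⟨(N 0 0).fst, (N 0 1).snd, (N 1 0).snd, (N 1 1).fst, ?_, ?_, ?_, ?_⟩ <;>
        apply TrivSqZeroExt.ext <;>
        simp [TrivSqZeroExt.algebraMap_eq_inl, TrivSqZeroExt.fst_inl, TrivSqZeroExt.snd_inl,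
          TrivSqZeroExt.fst_smul, TrivSqZeroExt.snd_smul, DualNumber.fst_eps,
          DualNumber.snd_eps, h00, h01, h10, h11]
    · rintro ⟨a, b, c, d, h00, h01, h10, h11⟩
      refine mem_Asub_iff.mpr ⟨?_, ?_, ?_, ?_⟩ <;>
        simp [h00, h01, h10, h11, TrivSqZeroExt.algebraMap_eq_inl, TrivSqZeroExt.fst_inl,
          TrivSqZeroExt.snd_inl, TrivSqZeroExt.fst_smul, TrivSqZeroExt.snd_smul,
          DualNumber.fst_eps, DualNumber.snd_eps]
  · have hmaps : ∀ x : even (Qf k), Phi i hi (x : CliffordAlgebra (Qf k)) ∈ Asub k :=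
      fun x => Phi_even_mem i hi x.2
    let F : even (Qf k) →ₐ[k] Asub k :=
      ((Phi i hi).comp (even (Qf k)).val).codRestrict (Asub k) hmaps
    refine ⟨AlgEquiv.ofBijective F ⟨?_, ?_⟩⟩
    · rw [injective_iff_map_eq_zero]
      intro x hx0
      have hv : Phi i hi (x : CliffordAlgebra (Qf k)) = 0 := congrArg Subtype.val hx0
      exact Subtype.ext (Phi_inj_on_even i hi h2 hi0 x.2 hv)
    · rintro ⟨N, hN⟩
      obtain ⟨x, hx, hPx⟩ := Phi_surj i hi h2 hN
      exact ⟨⟨x, hx⟩, Subtype.ext hPx⟩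
end

section
/- Let k be an algebraically closed field of characteristic ≠ 2, let N ≥ 1, let Q ∈ k[x₁,…,x_N] be homogeneous of degree 2 and G ∈ k[x₁,…,x_N] homogeneous of degree 3, and set F = x₀·Q + G ∈ k[x₀, x₁, …, x_N]. Assume: (a) for every z ∈ k^{N+1} with F(z) = 0 and ∂F/∂xᵢ(z) = 0 for all i = 0,…,N, the point z is a scalar multiple of e₀ = (1,0,…,0) (i.e. the projective hypersurface F = 0 is smooth away from [e₀]); and (b) for every y ∈ k^N \ {0} with ∂Q/∂xᵢ(y) = 0 for all i = 1,…,N, one has G(y) ≠ 0 (i.e. the cubic G = 0 avoids the singular points of the quadric Q = 0). Then for every z ∈ k^N \ {0} with Q(z) = 0 and G(z) = 0, the gradient vectors (∂Q/∂x₁(z),…,∂Q/∂x_N(z)) and (∂G/∂x₁(z),…,∂G/∂x_N(z)) are linearly independent over k; in particular the complete intersection Q = G = 0 in projective space is smooth. -/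
lemma pderiv_zero_rename_succ {k : Type} [CommRing k] {N : ℕ} (p : MvPolynomial (Fin N) k) :
    MvPolynomial.pderiv 0 (MvPolynomial.rename Fin.succ p) = 0 := by
  apply MvPolynomial.pderiv_eq_zero_of_notMem_vars
  intro h
  have := MvPolynomial.vars_rename Fin.succ p h
  simp only [Finset.mem_image] at this
  obtain ⟨i, -, hi⟩ := this
  exact Fin.succ_ne_zero i hi

/-- Let `k` be an algebraically closed field of characteristic `≠ 2`, let
`N ≥ 1`, let `Q ∈ k[x₁, …, x_N]` be homogeneous of degree `2`, `G ∈ k[x₁, …, x_N]` homogeneous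
of degree `3`, and set `F = x₀·Q + G ∈ k[x₀, …, x_N]`.  Assume (a) the projective cubic
hypersurface `F = 0` is smooth away from `[e₀]`, i.e. every point where `F` and all its partial
derivatives vanish is a scalar multiple of `e₀ = (1, 0, …, 0)`; and (b) the cubic `G = 0`
avoids the singular points of the quadric `Q = 0`.  Then at every nonzero `z` with
`Q(z) = G(z) = 0`, the gradients of `Q` and of `G` are linearly independent over `k`; in
particular the complete intersection `Q = G = 0` is smooth. -/
theorem stmt19 (k : Type) [Field k] [IsAlgClosed k] (hchar : ringChar k ≠ 2)
    (N : ℕ) (hN : 1 ≤ N)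
    (Q G : MvPolynomial (Fin N) k)
    (hQ : Q.IsHomogeneous 2) (hG : G.IsHomogeneous 3)
    (F : MvPolynomial (Fin (N + 1)) k)
    (hF : F = MvPolynomial.X 0 * MvPolynomial.rename Fin.succ Q +
      MvPolynomial.rename Fin.succ G)
    (ha : ∀ z : Fin (N + 1) → k,
      MvPolynomial.eval z F = 0 →
      (∀ i : Fin (N + 1), MvPolynomial.eval z (MvPolynomial.pderiv i F) = 0) →
      ∃ c : k, z = c • (fun j => if j = 0 then (1 : k) else 0))
    (hb : ∀ y : Fin N → k, y ≠ 0 →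
      (∀ i : Fin N, MvPolynomial.eval y (MvPolynomial.pderiv i Q) = 0) →
      MvPolynomial.eval y G ≠ 0) :
    ∀ z : Fin N → k, z ≠ 0 →
      MvPolynomial.eval z Q = 0 → MvPolynomial.eval z G = 0 →
      LinearIndependent k
        ![fun i : Fin N => MvPolynomial.eval z (MvPolynomial.pderiv i Q),
          fun i : Fin N => MvPolynomial.eval z (MvPolynomial.pderiv i G)] := by
  intro z hz hQz hGz
  rw [LinearIndependent.pair_iff]
  intro s t hst
  by_contra hcon
  rw [not_and_or] at hcon
  have hst' : ∀ i : Fin N,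
      s * MvPolynomial.eval z (MvPolynomial.pderiv i Q)
        + t * MvPolynomial.eval z (MvPolynomial.pderiv i G) = 0 := by
    intro i
    have := congrFun hst i
    simpa using this
  rcases eq_or_ne t 0 with ht | ht
  · -- then s ≠ 0 and ∇Q(z) = 0, contradict (b)
    have hs : s ≠ 0 := by
      rcases hcon with h | h
      · exact h
      · exact absurd ht h
    have hQgrad : ∀ i : Fin N, MvPolynomial.eval z (MvPolynomial.pderiv i Q) = 0 := by
      intro i
      have := hst' i
      rw [ht, zero_mul, add_zero] at this
      exact (mul_eq_zero.mp this).resolve_left hs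
    exact hb z hz hQgrad hGz
  · -- set w = Fin.cons (s/t) z, apply (a)
    set w : Fin (N + 1) → k := Fin.cons (s / t) z with hw
    have hwsucc : (w ∘ Fin.succ) = z := by
      funext i; simp [hw]
    have hevF : MvPolynomial.eval w F = 0 := by
      simp [hF, MvPolynomial.eval_rename, hwsucc, hQz, hGz]
    have hderivF : ∀ i : Fin (N + 1), MvPolynomial.eval w (MvPolynomial.pderiv i F) = 0 := by
      intro i
      induction i using Fin.cases with
      | zero =>
        have : MvPolynomial.pderiv (0 : Fin (N+1)) F = MvPolynomial.rename Fin.succ Q := by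
          rw [hF]
          simp [MvPolynomial.pderiv_mul, pderiv_zero_rename_succ]
        rw [this]
        simp [MvPolynomial.eval_rename, hwsucc, hQz]
      | succ i =>
        have hren : MvPolynomial.pderiv (Fin.succ i) F =
            MvPolynomial.X 0 * MvPolynomial.rename Fin.succ (MvPolynomial.pderiv i Q)
              + MvPolynomial.rename Fin.succ (MvPolynomial.pderiv i G) := by
          rw [hF]
          rw [map_add, MvPolynomial.pderiv_mul,
            MvPolynomial.pderiv_rename (Fin.succ_injective N),
            MvPolynomial.pderiv_rename (Fin.succ_injective N)]
          have : MvPolynomial.pderiv (Fin.succ i) (MvPolynomial.X (0 : Fin (N+1))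
              : MvPolynomial (Fin (N+1)) k) = 0 := by
            rw [MvPolynomial.pderiv_X]
            simp [Pi.single_apply, (Fin.succ_ne_zero i).symm]
          rw [this, zero_mul, zero_add]
        rw [hren]
        have hw0 : w 0 = s / t := by simp [hw]
        simp only [map_add, map_mul, MvPolynomial.eval_X, MvPolynomial.eval_rename, hwsucc, hw0]
        field_simp
        have := hst' i
        linear_combination this
    obtain ⟨c, hc⟩ := ha w hevF hderivF
    apply hz
    funext i
    have := congrFun hc (Fin.succ i)
    simp [hw, Pi.smul_apply, (Fin.succ_ne_zero i)] at this
    simpa [hw] using this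
end
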